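/- Let X be a double category regarded as coherence data (a diagram Δ₂^op → Cat). There is a natural bijection between lax codescent cocones for X with apex a category Y and pairs of functors (F : X0 → Y, ξ : h(X) → Y) agreeing on objects and satisfying the naturality condition: whenever a square in X exists with top edge g, bottom edge h, left vertical edge u and right vertical edge v, then F(v)∘ξ(g) = ξ(h)∘F(u) in Y. Moreover, for a crossed double category X, the pair of functors X0 → Cnr(X), u ↦ [u,1] and h(X) → Cnr(X), g ↦ [1,g] exhibits Cnr(X) as the lax codescent object of X. -/

import Mathlib

open CategoryTheory

universe u

namespace Paper

/-- A (strict) double category, presented elementarily: objects, vertical morphisms,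
horizontal morphisms and squares, with vertical and horizontal compositions of squares. -/
structure DblCat : Type (u + 1) where
  Obj : Type u
  Ver : Obj → Obj → Type u
  Hor : Obj → Obj → Type u
  vId : ∀ a, Ver a a
  vComp : ∀ {a b c}, Ver a b → Ver b c → Ver a c
  hId : ∀ a, Hor a a
  hComp : ∀ {a b c}, Hor a b → Hor b c → Hor a c
  vId_comp : ∀ {a b} (f : Ver a b), vComp (vId a) f = f
  vComp_id : ∀ {a b} (f : Ver a b), vComp f (vId b) = f
  vAssoc : ∀ {a b c d} (f : Ver a b) (g : Ver b c) (h : Ver c d),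
    vComp (vComp f g) h = vComp f (vComp g h)
  hId_comp : ∀ {a b} (f : Hor a b), hComp (hId a) f = f
  hComp_id : ∀ {a b} (f : Hor a b), hComp f (hId b) = f
  hAssoc : ∀ {a b c d} (f : Hor a b) (g : Hor b c) (h : Hor c d),
    hComp (hComp f g) h = hComp f (hComp g h)
  /-- squares, indexed by top, left, right, bottom boundary -/
  Sq : ∀ {a b c d}, Hor a b → Ver a c → Ver b d → Hor c d → Type u
  vSq : ∀ {a b c d e f : Obj} {t : Hor a b} {l : Ver a c} {r : Ver b d} {m : Hor c d}
    {l' : Ver c e} {r' : Ver d f} {bo : Hor e f},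
    Sq t l r m → Sq m l' r' bo → Sq t (vComp l l') (vComp r r') bo
  hSq : ∀ {a b c a' b' c' : Obj} {t1 : Hor a b} {t2 : Hor b c} {l : Ver a a'} {m : Ver b b'}
    {r : Ver c c'} {b1 : Hor a' b'} {b2 : Hor b' c'},
    Sq t1 l m b1 → Sq t2 m r b2 → Sq (hComp t1 t2) l r (hComp b1 b2)
  vIdSq : ∀ {a b} (g : Hor a b), Sq g (vId a) (vId b) g
  hIdSq : ∀ {a b} (u : Ver a b), Sq (hId a) u u (hId b)
  vSq_id_comp : ∀ {a b c d} {t : Hor a b} {l : Ver a c} {r : Ver b d} {bo : Hor c d}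
    (α : Sq t l r bo), HEq (vSq (vIdSq t) α) α
  vSq_comp_id : ∀ {a b c d} {t : Hor a b} {l : Ver a c} {r : Ver b d} {bo : Hor c d}
    (α : Sq t l r bo), HEq (vSq α (vIdSq bo)) α
  vSq_assoc : ∀ {a b c d e f g h : Obj} {t : Hor a b} {l : Ver a c} {r : Ver b d}
    {m1 : Hor c d} {l' : Ver c e} {r' : Ver d f} {m2 : Hor e f}
    {l'' : Ver e g} {r'' : Ver f h} {bo : Hor g h}
    (α : Sq t l r m1) (β : Sq m1 l' r' m2) (γ : Sq m2 l'' r'' bo),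
    HEq (vSq (vSq α β) γ) (vSq α (vSq β γ))
  hSq_id_comp : ∀ {a b c d} {t : Hor a b} {l : Ver a c} {r : Ver b d} {bo : Hor c d}
    (α : Sq t l r bo), HEq (hSq (hIdSq l) α) α
  hSq_comp_id : ∀ {a b c d} {t : Hor a b} {l : Ver a c} {r : Ver b d} {bo : Hor c d}
    (α : Sq t l r bo), HEq (hSq α (hIdSq r)) α
  hSq_assoc : ∀ {a b c d a' b' c' d' : Obj} {t1 : Hor a b} {t2 : Hor b c} {t3 : Hor c d}
    {l : Ver a a'} {m1 : Ver b b'} {m2 : Ver c c'} {r : Ver d d'}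
    {b1 : Hor a' b'} {b2 : Hor b' c'} {b3 : Hor c' d'}
    (α : Sq t1 l m1 b1) (β : Sq t2 m1 m2 b2) (γ : Sq t3 m2 r b3),
    HEq (hSq (hSq α β) γ) (hSq α (hSq β γ))
  interchange : ∀ {a b c a' b' c' a'' b'' c'' : Obj}
    {t1 : Hor a b} {t2 : Hor b c} {l : Ver a a'} {m : Ver b b'} {r : Ver c c'}
    {b1 : Hor a' b'} {b2 : Hor b' c'}
    {l' : Ver a' a''} {m' : Ver b' b''} {r' : Ver c' c''}
    {c1 : Hor a'' b''} {c2 : Hor b'' c''}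
    (α : Sq t1 l m b1) (γ : Sq t2 m r b2) (β : Sq b1 l' m' c1) (δ : Sq b2 m' r' c2),
    hSq (vSq α β) (vSq γ δ) = vSq (hSq α γ) (hSq β δ)
  vIdSq_hId : ∀ a, vIdSq (hId a) = hIdSq (vId a)
  vIdSq_hComp : ∀ {a b c} (g : Hor a b) (h : Hor b c),
    vIdSq (hComp g h) = hSq (vIdSq g) (vIdSq h)
  hIdSq_vComp : ∀ {a b c} (u : Ver a b) (v : Ver b c),
    hIdSq (vComp u v) = vSq (hIdSq u) (hIdSq v)

namespace DblCat

variable (X : DblCat.{u})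

/-- A square `κ` (with top `g`, left `l`, right `u`, bottom `bo`) is opcartesian
(with respect to the codomain functor `d₀ : X₁ → X₀`). -/
def Opcart {a b bh c : X.Obj} {g : X.Hor a b} {l : X.Ver a bh} {u : X.Ver b c}
    {bo : X.Hor bh c} (κ : X.Sq g l u bo) : Prop :=
  ∀ {d e : X.Obj} (w : X.Ver a d) (v : X.Ver c e) (h : X.Hor d e)
    (α : X.Sq g w (X.vComp u v) h),
    ∃! p : Σ' θ : X.Ver bh d, X.Sq bo θ v h,
      X.vComp l p.1 = w ∧ HEq (X.vSq κ p.2) α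

/-- A crossed double category: every top-right corner has an opcartesian filler,
horizontal identity squares are opcartesian, and opcartesian squares are closed under
horizontal composition. -/
def Crossed : Prop :=
  (∀ {a b c : X.Obj} (g : X.Hor a b) (u : X.Ver b c),
      ∃ (bh : X.Obj) (l : X.Ver a bh) (bo : X.Hor bh c) (κ : X.Sq g l u bo), X.Opcart κ) ∧
  (∀ {a b : X.Obj} (u : X.Ver a b), X.Opcart (X.hIdSq u)) ∧
  (∀ {a b c a' b' c' : X.Obj} {t1 : X.Hor a b} {t2 : X.Hor b c} {l : X.Ver a a'}
      {m : X.Ver b b'} {r : X.Ver c c'} {b1 : X.Hor a' b'} {b2 : X.Hor b' c'}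
      (κ1 : X.Sq t1 l m b1) (κ2 : X.Sq t2 m r b2),
      X.Opcart κ1 → X.Opcart κ2 → X.Opcart (X.hSq κ1 κ2))

/-- Opcartesian in `X* = ((Xᵛ)ʰ)ᵀ`, expressed elementarily in `X`. -/
def Opcart2 {a b bh c : X.Obj} {g : X.Hor a b} {l : X.Ver a bh} {u : X.Ver b c}
    {bo : X.Hor bh c} (κ : X.Sq g l u bo) : Prop :=
  ∀ {e : X.Obj} (w : X.Ver a e) (k : X.Hor e c) (α : X.Sq g w u k),
    ∃! p : Σ' ψ : X.Hor e bh, X.Sq (X.hId a) w l ψ,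
      HEq (X.hSq p.2 κ) α

/-- Bicartesian squares: opcartesian in both `X` and `X*`. -/
def Bicart {a b bh c : X.Obj} {g : X.Hor a b} {l : X.Ver a bh} {u : X.Ver b c}
    {bo : X.Hor bh c} (κ : X.Sq g l u bo) : Prop :=
  X.Opcart κ ∧ X.Opcart2 κ

/-- Top-right bicrossed double category. -/
def TopRightBicrossed : Prop :=
  (∀ {a b c : X.Obj} (g : X.Hor a b) (u : X.Ver b c),
      ∃ (bh : X.Obj) (l : X.Ver a bh) (bo : X.Hor bh c) (κ : X.Sq g l u bo), X.Bicart κ) ∧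
  (∀ {a b : X.Obj} (u : X.Ver a b), X.Bicart (X.hIdSq u)) ∧
  (∀ {a b : X.Obj} (g : X.Hor a b), X.Bicart (X.vIdSq g)) ∧
  (∀ {a b c a' b' c' : X.Obj} {t1 : X.Hor a b} {t2 : X.Hor b c} {l : X.Ver a a'}
      {m : X.Ver b b'} {r : X.Ver c c'} {b1 : X.Hor a' b'} {b2 : X.Hor b' c'}
      (κ1 : X.Sq t1 l m b1) (κ2 : X.Sq t2 m r b2),
      X.Bicart κ1 → X.Bicart κ2 → X.Bicart (X.hSq κ1 κ2)) ∧
  (∀ {a b c d e f : X.Obj} {t : X.Hor a b} {l : X.Ver a c} {r : X.Ver b d} {m : X.Hor c d}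
      {l' : X.Ver c e} {r' : X.Ver d f} {bo : X.Hor e f}
      (κ1 : X.Sq t l r m) (κ2 : X.Sq m l' r' bo),
      X.Bicart κ1 → X.Bicart κ2 → X.Bicart (X.vSq κ1 κ2))

/-- Codomain-discrete double category: every top-right corner fills into a unique square. -/
def CodDiscrete : Prop :=
  ∀ {a b c : X.Obj} (g : X.Hor a b) (u : X.Ver b c),
    ∃! p : Σ' (bh : X.Obj) (l : X.Ver a bh) (bo : X.Hor bh c), X.Sq g l u bo, True

/-- Every top-right corner can be filled into (at least) one square. -/
def CornerFill : Prop :=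
  ∀ {a b c : X.Obj} (g : X.Hor a b) (u : X.Ver b c),
    ∃ (bh : X.Obj) (l : X.Ver a bh) (bo : X.Hor bh c), Nonempty (X.Sq g l u bo)

def AllOpcart : Prop :=
  ∀ {a b c d : X.Obj} {t : X.Hor a b} {l : X.Ver a c} {r : X.Ver b d} {bo : X.Hor c d}
    (κ : X.Sq t l r bo), X.Opcart κ

def AllBicart : Prop :=
  ∀ {a b c d : X.Obj} {t : X.Hor a b} {l : X.Ver a c} {r : X.Ver b d} {bo : X.Hor c d}
    (κ : X.Sq t l r bo), X.Bicart κ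

def HIso {a b : X.Obj} (g : X.Hor a b) : Prop :=
  ∃ g' : X.Hor b a, X.hComp g g' = X.hId a ∧ X.hComp g' g = X.hId b

def VIso {a b : X.Obj} (u : X.Ver a b) : Prop :=
  ∃ u' : X.Ver b a, X.vComp u u' = X.vId a ∧ X.vComp u' u = X.vId b

/-- Strict horizontal invariance. -/
def HorInvariant : Prop :=
  ∀ {a b c d : X.Obj} (g : X.Hor a b) (h : X.Hor c d) (u : X.Ver b d),
    X.HIso g → X.HIso h → ∃! _p : Σ' w : X.Ver a c, X.Sq g w u h, True

/-- Strict vertical invariance. -/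
def VerInvariant : Prop :=
  ∀ {a b c d : X.Obj} (g : X.Hor a b) (u : X.Ver a c) (v : X.Ver b d),
    X.VIso u → X.VIso v → ∃! _p : Σ' h : X.Hor c d, X.Sq g u v h, True

def Invariant : Prop := X.HorInvariant ∧ X.VerInvariant

/-- The top-left corner `(π₁, π₂)` of the vertical dual `Xᵛ`, expressed in `X`
(`π₁ : a → a'` vertical in `X`, `π₂ : a' → b` horizontal), is jointly monic. -/
def JMonicVDual {a a' b : X.Obj} (π₁ : X.Ver a a') (π₂ : X.Hor a' b) : Prop :=
  ∀ {a'' : X.Obj} (θ θ' : X.Ver a' a'') (ψ ψ' : X.Hor a'' a')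
    (_κ1 : X.Sq (X.hId a') θ (X.vId a') ψ) (_κ2 : X.Sq (X.hId a') θ' (X.vId a') ψ'),
    X.vComp π₁ θ = X.vComp π₁ θ' → X.hComp ψ π₂ = X.hComp ψ' π₂ → θ = θ' ∧ ψ = ψ'

/-- Factorization double category. -/
def IsFactDbl : Prop :=
  X.Invariant ∧ X.CornerFill ∧ X.AllBicart ∧
  (∀ {a a' b : X.Obj} (π₁ : X.Ver a a') (π₂ : X.Hor a' b), X.JMonicVDual π₁ π₂)

/-- A corner from `a` to `b`: a vertical morphism followed by a horizontal one. -/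
structure Corner (a b : X.Obj) : Type u where
  mid : X.Obj
  v : X.Ver a mid
  h : X.Hor mid b

/-- A 2-cell between corners. -/
def CellRel {a b : X.Obj} (c1 c2 : X.Corner a b) : Prop :=
  ∃ (θ : X.Ver c1.mid c2.mid) (_β : X.Sq c1.h θ (X.vId b) c2.h), X.vComp c1.v θ = c2.v

/-- Morphisms of the category of corners: corners modulo zigzags of 2-cells. -/
def CnrHom (a b : X.Obj) : Type u := Quot (fun c1 c2 : X.Corner a b => X.CellRel c1 c2)

def mkCnr {a b : X.Obj} (c : X.Corner a b) : X.CnrHom a b := Quot.mk _ c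

/-- The vertical corner `[u, 1]`. -/
def mkE {a b : X.Obj} (u : X.Ver a b) : X.CnrHom a b := X.mkCnr ⟨b, u, X.hId b⟩

/-- The horizontal corner `[1, g]`. -/
def mkM {a b : X.Obj} (g : X.Hor a b) : X.CnrHom a b := X.mkCnr ⟨a, X.vId a, g⟩

/-- The identity corner `[1ₐ, 1ₐ]`. -/
def cnrId (a : X.Obj) : X.CnrHom a a := X.mkCnr ⟨a, X.vId a, X.hId a⟩

/-- A composition operation on corners which is computed by filling the middle
corner with (any) opcartesian square. -/
structure CnrStruct (X : DblCat.{u}) where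
  comp : ∀ {a b c : X.Obj}, X.CnrHom a b → X.CnrHom b c → X.CnrHom a c
  compat : ∀ {a m1 b m2 c bh : X.Obj} (u : X.Ver a m1) (g : X.Hor m1 b)
    (v : X.Ver b m2) (h : X.Hor m2 c)
    (w : X.Ver m1 bh) (bo : X.Hor bh m2) (κ : X.Sq g w v bo), X.Opcart κ →
    comp (X.mkCnr ⟨m1, u, g⟩) (X.mkCnr ⟨m2, v, h⟩) =
      X.mkCnr ⟨bh, X.vComp u w, X.hComp bo h⟩

/-- The category of corners: a corner composition which is unital and associative. -/
structure CnrCat (X : DblCat.{u}) extends CnrStruct X where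
  id_comp : ∀ {a b : X.Obj} (f : X.CnrHom a b), comp (X.cnrId a) f = f
  comp_id : ∀ {a b : X.Obj} (f : X.CnrHom a b), comp f (X.cnrId b) = f
  assoc : ∀ {a b c d : X.Obj} (f : X.CnrHom a b) (g : X.CnrHom b c) (h : X.CnrHom c d),
    comp (comp f g) h = comp f (comp g h)

/-- The class `E_X` of vertical corners. -/
def InE {a b : X.Obj} (f : X.CnrHom a b) : Prop := ∃ u : X.Ver a b, f = X.mkE u

/-- The class `M_X` of horizontal corners. -/
def InM {a b : X.Obj} (f : X.CnrHom a b) : Prop := ∃ g : X.Hor a b, f = X.mkM g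

/-- Isomorphisms in the category of corners. -/
def CnrIso (c : CnrStruct X) {a b : X.Obj} (f : X.CnrHom a b) : Prop :=
  ∃ g : X.CnrHom b a, c.comp f g = X.cnrId a ∧ c.comp g f = X.cnrId b

end DblCat

end Paper

namespace Paper

open CategoryTheory

/-- The category `X₀` of objects and vertical morphisms. -/
def VObj (X : DblCat.{u}) : Type u := X.Obj

instance (X : DblCat.{u}) : Category.{u} (VObj X) where
  Hom a b := X.Ver a b
  id a := X.vId a
  comp f g := X.vComp f g
  id_comp := X.vId_comp
  comp_id := X.vComp_id
  assoc := X.vAssoc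

/-- The category `h(X)` of objects and horizontal morphisms. -/
def HObj (X : DblCat.{u}) : Type u := X.Obj

instance (X : DblCat.{u}) : Category.{u} (HObj X) where
  Hom a b := X.Hor a b
  id a := X.hId a
  comp f g := X.hComp f g
  id_comp := X.hId_comp
  comp_id := X.hComp_id
  assoc := X.hAssoc

/-- A lax codescent cocone for the coherence data associated to the double category
`X`, with apex `Y`, unfolded elementwise: a functor `F : X₀ → Y` together with a
natural transformation `ξ : F d₁ ⇒ F d₀` (i.e. components `ξ g` indexed by horizontal
morphisms, natural in squares) satisfying the multiplicativity and unit cocone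
conditions. -/
structure Cocone19 (X : DblCat.{u}) (Y : Type u) [Category.{u} Y] : Type u where
  F : VObj X ⥤ Y
  xi : ∀ {a b : X.Obj}, X.Hor a b → (F.obj a ⟶ F.obj b)
  nat : ∀ {a b c d : X.Obj} {g : X.Hor a b} {u : X.Ver a c} {v : X.Ver b d}
    {h : X.Hor c d}, X.Sq g u v h → xi g ≫ F.map v = F.map u ≫ xi h
  xi_comp : ∀ {a b c : X.Obj} (g : X.Hor a b) (h : X.Hor b c),
    xi (X.hComp g h) = xi g ≫ xi h
  xi_id : ∀ a : X.Obj, xi (X.hId a) = 𝟙 (F.obj a)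

/-- A pair of functors `(F : X₀ → Y, G : h(X) → Y)` agreeing on objects and satisfying
the naturality condition with respect to squares of `X`. -/
structure Pair19 (X : DblCat.{u}) (Y : Type u) [Category.{u} Y] : Type u where
  F : VObj X ⥤ Y
  G : HObj X ⥤ Y
  hobj : ∀ a : X.Obj, F.obj a = G.obj a
  nat : ∀ {a b c d : X.Obj} {g : X.Hor a b} {u : X.Ver a c} {v : X.Ver b d}
    {h : X.Hor c d}, X.Sq g u v h →
    eqToHom (hobj a) ≫ G.map g ≫ eqToHom (hobj b).symm ≫ F.map v
      = F.map u ≫ eqToHom (hobj c) ≫ G.map h ≫ eqToHom (hobj d).symm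

section Aux

variable {X : DblCat.{u}} {Y : Type u} [Category.{u} Y]

/-- The horizontal functor packaged from a cocone. -/
def hFunctor (c : Cocone19 X Y) : HObj X ⥤ Y where
  obj a := c.F.obj a
  map {a b} g := c.xi g
  map_id a := c.xi_id a
  map_comp {a b d} f g := c.xi_comp f g

@[simp] lemma hFunctor_obj (c : Cocone19 X Y) (a : HObj X) :
    (hFunctor c).obj a = c.F.obj a := rfl

@[simp] lemma hFunctor_map (c : Cocone19 X Y) {a b : X.Obj} (g : X.Hor a b) :
    (hFunctor c).map g = c.xi g := rfl

def toPair (c : Cocone19 X Y) : Pair19 X Y where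
  F := c.F
  G := hFunctor c
  hobj _ := rfl
  nat {a b c₁ d g u v h} σ := by
    show 𝟙 _ ≫ c.xi g ≫ 𝟙 _ ≫ c.F.map v = c.F.map u ≫ 𝟙 _ ≫ c.xi h ≫ 𝟙 _
    simpa using c.nat σ

def toCocone (p : Pair19 X Y) : Cocone19 X Y where
  F := p.F
  xi {a b} g := eqToHom (p.hobj a) ≫ p.G.map g ≫ eqToHom (p.hobj b).symm
  nat {a b c d g u v h} σ := by simpa using p.nat σ
  xi_comp {a b d} g h := by
    have e : p.G.map (X.hComp g h) = p.G.map g ≫ p.G.map h := p.G.map_comp (f := g) (g := h)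
    rw [e]
    simp
  xi_id a := by
    have e : p.G.map (X.hId a) = 𝟙 (p.G.obj a) := p.G.map_id a
    rw [e]
    simp

lemma cocone_ext {c1 c2 : Cocone19 X Y} (hF : c1.F = c2.F)
    (hxi : HEq (@Cocone19.xi _ _ _ c1) (@Cocone19.xi _ _ _ c2)) : c1 = c2 := by
  cases c1; cases c2
  cases hF
  cases eq_of_heq hxi
  rfl

lemma pair_ext {p1 p2 : Pair19 X Y} (hF : p1.F = p2.F) (hG : p1.G = p2.G) : p1 = p2 := by
  cases p1; cases p2
  cases hF
  cases hG
  rfl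

def coconeEquiv : Cocone19 X Y ≃ Pair19 X Y where
  toFun := toPair
  invFun := toCocone
  left_inv c := by
    refine cocone_ext rfl (heq_of_eq ?_)
    funext a b g
    simp [toCocone, toPair, hFunctor]
  right_inv p := by
    refine pair_ext rfl ?_
    refine CategoryTheory.Functor.ext (fun a => p.hobj a) ?_
    intro a b g
    rfl

/-- The map induced by a cocone on the category of corners. -/
def coconeMap (G : Cocone19 X Y) {a b : X.Obj} : X.CnrHom a b → (G.F.obj a ⟶ G.F.obj b) :=
  Quot.lift (fun cn => G.F.map cn.v ≫ G.xi cn.h) (by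
    intro c1 c2 hrel
    obtain ⟨θ, β, hv⟩ := hrel
    have h1 := G.nat β
    rw [show G.F.map (X.vId b) = 𝟙 _ from G.F.map_id b, Category.comp_id] at h1
    rw [← hv, show G.F.map (X.vComp c1.v θ) = G.F.map c1.v ≫ G.F.map θ from
      G.F.map_comp c1.v θ, Category.assoc, ← h1])

@[simp] lemma coconeMap_mk (G : Cocone19 X Y) {a b : X.Obj} (cn : X.Corner a b) :
    coconeMap G (X.mkCnr cn) = G.F.map cn.v ≫ G.xi cn.h := rfl

end Aux

open DblCat in
/-- (i) Codescent cocones for a double category `X` with apex `Y` are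
in natural bijection with pairs of functors `(F : X₀ → Y, ξ : h(X) → Y)` which agree on
objects and satisfy the naturality condition with respect to squares. (ii) For a
crossed double category `X`, the pair `u ↦ [u,1]`, `g ↦ [1,g]` exhibits the category of
corners `Cnr X` as the lax codescent object of `X`: it is a codescent cocone, and it is
universal among codescent cocones. -/
theorem statement19 (X : DblCat.{u}) :
    -- (i) the bijection between cocones and pairs of functors
    (∀ (Y : Type u) [Category.{u} Y],
      ∃ e : Cocone19 X Y ≃ Pair19 X Y,
        (∀ c : Cocone19 X Y, (e c).F = c.F ∧
          ∃ h : ∀ a : X.Obj, (e c).G.obj a = c.F.obj a,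
            ∀ {a b : X.Obj} (g : X.Hor a b),
              (e c).G.map g = eqToHom (h a) ≫ c.xi g ≫ eqToHom (h b).symm)) ∧
    -- (ii) for crossed X, (mkE, mkM) is the codescent object
    (∀ (_hX : X.Crossed) (c : CnrCat X),
      -- it is a cocone: compatibility of [·,1] and [1,·] with the structure of X
      (∀ {a b d : X.Obj} (u : X.Ver a b) (u' : X.Ver b d),
          c.comp (X.mkE u) (X.mkE u') = X.mkE (X.vComp u u')) ∧
      (∀ {a b c' : X.Obj} (g : X.Hor a b) (h : X.Hor b c'),
          c.comp (X.mkM g) (X.mkM h) = X.mkM (X.hComp g h)) ∧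
      (∀ {a b c' d : X.Obj} {g : X.Hor a b} {u : X.Ver a c'} {v : X.Ver b d}
          {h : X.Hor c' d}, X.Sq g u v h →
          c.comp (X.mkM g) (X.mkE v) = c.comp (X.mkE u) (X.mkM h)) ∧
      -- universality: every cocone factors uniquely through Cnr X
      (∀ (Y : Type u) [Category.{u} Y] (G : Cocone19 X Y),
        ∃! θ : ∀ (a b : X.Obj), X.CnrHom a b → (G.F.obj a ⟶ G.F.obj b),
          (∀ a : X.Obj, θ a a (X.cnrId a) = 𝟙 (G.F.obj a)) ∧
          (∀ {a b d : X.Obj} (f : X.CnrHom a b) (g : X.CnrHom b d),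
              θ a d (c.comp f g) = θ a b f ≫ θ b d g) ∧
          (∀ {a b : X.Obj} (u : X.Ver a b), θ a b (X.mkE u) = G.F.map u) ∧
          (∀ {a b : X.Obj} (g : X.Hor a b), θ a b (X.mkM g) = G.xi g))) := by
  constructor
  · intro Y _
    refine ⟨coconeEquiv, fun c => ⟨rfl, fun _ => rfl, fun {a b} g => ?_⟩⟩
    simp [coconeEquiv, toPair, hFunctor]
    exact (Category.id_comp _).symm
  · intro hX c
    obtain ⟨hfill, hid, hhcomp⟩ := hX
    refine ⟨?_, ?_, ?_, ?_⟩
    · intro a b d u u'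
      simp only [DblCat.mkE]
      rw [c.compat u (X.hId b) u' (X.hId d) u' (X.hId d) (X.hIdSq u') (hid u'),
        X.hId_comp]
    · intro a b c' g h
      obtain ⟨bh, l, bo, κ, hκ⟩ := hfill g (X.vId b)
      have α : X.Sq g (X.vId a) (X.vComp (X.vId b) (X.vId b)) g := by
        rw [X.vComp_id]; exact X.vIdSq g
      obtain ⟨⟨θ, β⟩, ⟨hθ, -⟩, -⟩ := hκ (X.vId a) (X.vId b) g α
      simp only [DblCat.mkM]
      rw [c.compat (X.vId a) g (X.vId b) h l bo κ hκ]
      refine Quot.sound ⟨θ, X.hSq β (X.vIdSq h), ?_⟩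
      rw [X.vId_comp]; exact hθ
    · intro a b c' d g u v h σ
      obtain ⟨bh, l, bo, κ, hκ⟩ := hfill g v
      have α : X.Sq g u (X.vComp v (X.vId d)) h := by
        rw [X.vComp_id]; exact σ
      obtain ⟨⟨θ, β⟩, ⟨hθ, -⟩, -⟩ := hκ u (X.vId d) h α
      have β' : X.Sq (X.hComp bo (X.hId d)) θ (X.vId d) h := by
        rw [X.hComp_id]; exact β
      simp only [DblCat.mkM, DblCat.mkE]
      rw [c.compat (X.vId a) g v (X.hId d) l bo κ hκ,
        c.compat u (X.hId c') (X.vId c') h (X.vId c') (X.hId c')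
          (X.hIdSq (X.vId c')) (hid _),
        X.vComp_id, X.hId_comp]
      refine Quot.sound ⟨θ, β', ?_⟩
      rw [X.vId_comp]; exact hθ
    · intro Y _ G
      refine ⟨fun a b => coconeMap G, ⟨?_, ?_, ?_, ?_⟩, ?_⟩
      · intro a
        show G.F.map (X.vId a) ≫ G.xi (X.hId a) = _
        rw [show G.F.map (X.vId a) = 𝟙 _ from G.F.map_id a, G.xi_id, Category.comp_id]
      · intro a b d f g'
        induction f using Quot.ind with | mk c1 => ?_
        induction g' using Quot.ind with | mk c2 => ?_
        obtain ⟨m1, u, g⟩ := c1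
        obtain ⟨m2, v, h⟩ := c2
        obtain ⟨bh, w, bo, κ, hκ⟩ := hfill g v
        show coconeMap G (c.comp (X.mkCnr ⟨m1, u, g⟩) (X.mkCnr ⟨m2, v, h⟩))
          = coconeMap G (X.mkCnr ⟨m1, u, g⟩) ≫ coconeMap G (X.mkCnr ⟨m2, v, h⟩)
        rw [c.compat u g v h w bo κ hκ]
        have hn := G.nat κ
        simp only [coconeMap_mk]
        rw [show G.F.map (X.vComp u w) = G.F.map u ≫ G.F.map w from G.F.map_comp u w,
          G.xi_comp, Category.assoc]
        rw [show G.F.map w ≫ G.xi bo ≫ G.xi h = (G.F.map w ≫ G.xi bo) ≫ G.xi h from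
          (Category.assoc _ _ _).symm, ← hn]
        simp [Category.assoc]
      · intro a b u
        show G.F.map u ≫ G.xi (X.hId b) = G.F.map u
        rw [G.xi_id, Category.comp_id]
      · intro a b g
        show G.F.map (X.vId a) ≫ G.xi g = G.xi g
        rw [show G.F.map (X.vId a) = 𝟙 _ from G.F.map_id a, Category.id_comp]
      · intro θ' hθ'
        obtain ⟨h1, h2, h3, h4⟩ := hθ'
        funext a b f
        induction f using Quot.ind with | mk cn => ?_
        obtain ⟨m, u, g⟩ := cn
        have key : X.mkCnr ⟨m, u, g⟩ = c.comp (X.mkE u) (X.mkM g) := by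
          simp only [DblCat.mkE, DblCat.mkM]
          rw [c.compat u (X.hId m) (X.vId m) g (X.vId m) (X.hId m)
            (X.hIdSq (X.vId m)) (hid _), X.vComp_id, X.hId_comp]
        show θ' a b (X.mkCnr ⟨m, u, g⟩) = coconeMap G (X.mkCnr ⟨m, u, g⟩)
        rw [coconeMap_mk, key, h2, h3, h4]

end Paper
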